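/- Let a be a critical element for a symmetric matrix A with similarity layers X_0, ..., X_k rooted at a covering V. If there exist x ∈ X_i, y ∈ X_j, z ∈ X_h with i < j < h and A[y,z] < A[x,z] ≤ A[x,y], then {a, y, z} is a weighted asteroidal triple of A. -/

import Mathlib

/-- The consecutive pairs of `l` avoid `z` with respect to the matrix `A`. -/
def AvoidChain {V : Type*} (A : V → V → ℝ) (z : V) (l : List V) : Prop :=
  l.Chain' fun u w => min (A u z) (A w z) < A u w

/-- `l` is a path from `x` to `y` avoiding `z` in `A`: a sequence of distinct
elements starting at `x`, ending at `y`, each consecutive pair avoiding `z`. -/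
def AvoidPath {V : Type*} (A : V → V → ℝ) (z x y : V) (l : List V) : Prop :=
  l.Nodup ∧ l.head? = some x ∧ l.getLast? = some y ∧ AvoidChain A z l

/-- `x ~^z y`: there is a path from `x` to `y` avoiding `z` in `A`. -/
def Avoids {V : Type*} (A : V → V → ℝ) (z x y : V) : Prop :=
  ∃ l, AvoidPath A z x y l

/-- `{x,y,z}` is a weighted asteroidal triple of `A`. -/
def IsWAT {V : Type*} (A : V → V → ℝ) (x y z : V) : Prop :=
  x ≠ y ∧ y ≠ z ∧ x ≠ z ∧ Avoids A z x y ∧ Avoids A x y z ∧ Avoids A y z x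

/-- `π` is a Robinson ordering of `A`. -/
def IsRobinsonOrdering {V : Type*} [Fintype V] (A : V → V → ℝ)
    (π : Fin (Fintype.card V) ≃ V) : Prop :=
  ∀ i j k : Fin (Fintype.card V), i < j → j < k →
    A (π i) (π k) ≤ min (A (π i) (π j)) (A (π j) (π k))

/-- `A` is Robinsonian: it admits a Robinson ordering. -/
def Robinsonian {V : Type*} [Fintype V] (A : V → V → ℝ) : Prop :=
  ∃ π : Fin (Fintype.card V) ≃ V, IsRobinsonOrdering A π

/-- `S` is strongly homogeneous for `A`. -/
def StronglyHomogeneous {V : Type*} [DecidableEq V] (A : V → V → ℝ) (S : Finset V) : Prop :=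
  ∀ x ∉ S, ∀ y ∈ S, ∀ z ∈ S, A x y = A x z ∧ A x y ≤ A y z

/-- `a` is critical for `A`: between any two distinct elements of `V \ {a}`
there is a path avoiding `a`. -/
def IsCritical {V : Type*} (A : V → V → ℝ) (a : V) : Prop :=
  ∀ x y : V, x ≠ a → y ≠ a → x ≠ y → Avoids A a x y

/-- The similarity layers of `A` rooted at `a`, together with the union of the
layers so far: `(simLayersAux A a n).1` is the `n`-th layer `X_n` and
`(simLayersAux A a n).2 = X_0 ∪ ⋯ ∪ X_n`. -/
def simLayersAux {V : Type*} (A : V → V → ℝ) (a : V) : ℕ → Set V × Set V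
  | 0 => ({a}, {a})
  | n + 1 =>
    let U := (simLayersAux A a n).2
    let L := { y | y ∉ U ∧ ∀ x ∈ U, ∀ z ∉ U, A x z ≤ A x y }
    (L, U ∪ L)

/-- The `n`-th similarity layer `X_n` of `A` rooted at `a`. -/
def simLayer {V : Type*} (A : V → V → ℝ) (a : V) (n : ℕ) : Set V :=
  (simLayersAux A a n).1

section aux
variable {V : Type*} (A : V → V → ℝ) (a : V)

lemma mem_layer_succ {x : V} {n : ℕ} :
    x ∈ simLayer A a (n+1) ↔ x ∉ (simLayersAux A a n).2 ∧
      ∀ u ∈ (simLayersAux A a n).2, ∀ w, w ∉ (simLayersAux A a n).2 → A u w ≤ A u x :=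
  Iff.rfl

lemma U_succ (n : ℕ) :
    (simLayersAux A a (n+1)).2 = (simLayersAux A a n).2 ∪ simLayer A a (n+1) := rfl

lemma layer_subset (n : ℕ) : simLayer A a n ⊆ (simLayersAux A a n).2 := by
  cases n with
  | zero => exact subset_rfl
  | succ n => rw [U_succ]; exact Set.subset_union_right

lemma U_mono {m n : ℕ} (hmn : m ≤ n) :
    (simLayersAux A a m).2 ⊆ (simLayersAux A a n).2 := by
  induction hmn with
  | refl => exact subset_rfl
  | step _ ih => exact ih.trans (by rw [U_succ]; exact Set.subset_union_left)

lemma a_mem (n : ℕ) : a ∈ (simLayersAux A a n).2 :=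
  U_mono A a (Nat.zero_le n) rfl

lemma AvoidPath.concat {A : V → V → ℝ} {z s x w : V} {l : List V}
    (hp : AvoidPath A z s x l) (hw : w ∉ l)
    (hlt : min (A x z) (A w z) < A x w) : AvoidPath A z s w (l ++ [w]) := by
  obtain ⟨hnd, hhd, hlast, hch⟩ := hp
  have hne : l ≠ [] := by rintro rfl; simp at hhd
  refine ⟨?_, ?_, ?_, ?_⟩
  · rw [List.nodup_append]
    exact ⟨hnd, List.nodup_singleton w, by intro b hb c hc e; simp only [List.mem_singleton] at hc; subst hc; subst e; exact hw hb⟩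
  · rw [List.head?_append_of_ne_nil _ hne]; exact hhd
  · simpa using List.getLast?_concat l
  · rw [AvoidChain, List.Chain', List.isChain_append]
    refine ⟨hch, List.isChain_singleton w, ?_⟩
    intro p hp' q hq'
    rw [hlast, Option.mem_some_iff] at hp'
    simp only [List.head?_cons, Option.mem_some_iff] at hq'
    subst hp'; subst hq'
    exact hlt

lemma lemA : ∀ i : ℕ, ∀ x ∈ (simLayersAux A a i).2, ∀ z ∉ (simLayersAux A a i).2,
    ∃ l, AvoidPath A z a x l ∧ ∀ v ∈ l, v ∈ (simLayersAux A a i).2 := by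
  intro i
  induction i with
  | zero =>
    intro x hx z _
    have hxa : x = a := hx
    subst hxa
    exact ⟨[x], ⟨List.nodup_singleton x, rfl, rfl, List.isChain_singleton x⟩, by
      intro v hv; simp only [List.mem_singleton] at hv; subst hv; exact rfl⟩
  | succ n ih =>
    intro x hx z hz
    have hzU : z ∉ (simLayersAux A a n).2 := fun hmem => hz (Set.mem_union_left _ hmem)
    rcases hx with hx | hx
    · obtain ⟨l, hl, hsub⟩ := ih x hx z hzU
      exact ⟨l, hl, fun v hv => Set.mem_union_left _ (hsub v hv)⟩
    · have hx' := (mem_layer_succ A a).mp hx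
      obtain ⟨hxU, hxP⟩ := hx'
      have hzX : z ∉ simLayer A a (n+1) := fun hmem => hz (Set.mem_union_right _ hmem)
      rw [mem_layer_succ] at hzX
      push_neg at hzX
      obtain ⟨u, hu, w, hw, hlt⟩ := hzX hzU
      have key : A u z < A u x := hlt.trans_le (hxP u hu w hw)
      obtain ⟨l, hl, hsub⟩ := ih u hu z hzU
      have hxl : x ∉ l := fun hmem => hxU (hsub x hmem)
      refine ⟨l ++ [x], hl.concat hxl ((min_le_left _ _).trans_lt key), ?_⟩
      intro v hv
      rcases List.mem_append.mp hv with hmem | hmem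
      · exact Set.mem_union_left _ (hsub v hmem)
      · simp only [List.mem_singleton] at hmem
        subst hmem
        exact Set.mem_union_right _ hx

lemma avoids_rev {A : V → V → ℝ} (hsym : ∀ u v : V, A u v = A v u) {z x y : V}
    (hp : Avoids A z x y) : Avoids A z y x := by
  obtain ⟨l, hnd, hhd, hlast, hch⟩ := hp
  refine ⟨l.reverse, List.nodup_reverse.mpr hnd, ?_, ?_, ?_⟩
  · rw [List.head?_reverse]; exact hlast
  · rw [List.getLast?_reverse]; exact hhd
  · rw [AvoidChain, List.Chain', List.isChain_reverse]
    refine hch.imp (fun p q hpq => ?_)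
    show min (A q z) (A p z) < A q p
    rw [min_comm, hsym q p]
    exact hpq

end aux

theorem stmt_14 {V : Type*} (A : V → V → ℝ)
    (hsym : ∀ u v : V, A u v = A v u)
    (a : V) (ha : IsCritical A a) (k : ℕ)
    (hcov : ∀ v : V, ∃ i ≤ k, v ∈ simLayer A a i)
    (i j h : ℕ) (hij : i < j) (hjh : j < h) (x y z : V)
    (hx : x ∈ simLayer A a i) (hy : y ∈ simLayer A a j) (hz : z ∈ simLayer A a h)
    (h1 : A y z < A x z) (h2 : A x z ≤ A x y) :
    IsWAT A a y z := by
  obtain ⟨jp, rfl⟩ : ∃ jp, j = jp + 1 := ⟨j - 1, by omega⟩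
  obtain ⟨hp, rfl⟩ : ∃ hp, h = hp + 1 := ⟨h - 1, by omega⟩
  have hyU : y ∉ (simLayersAux A a jp).2 := ((mem_layer_succ A a).mp hy).1
  have hzU : z ∉ (simLayersAux A a hp).2 := ((mem_layer_succ A a).mp hz).1
  have hay : a ≠ y := fun e => hyU (e ▸ a_mem A a jp)
  have haz : a ≠ z := fun e => hzU (e ▸ a_mem A a hp)
  have hyUh : y ∈ (simLayersAux A a hp).2 :=
    U_mono A a (by omega) (layer_subset A a _ hy)
  have hyz : y ≠ z := fun e => hzU (e ▸ hyUh)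
  have hzUj : z ∉ (simLayersAux A a (jp+1)).2 := fun hzin => hzU (U_mono A a (by omega) hzin)
  -- leg 1 : a → y avoiding z
  obtain ⟨l, hl, _⟩ := lemA A a (jp+1) y (layer_subset A a _ hy) z hzUj
  -- leg 2 : y → z avoiding a
  have leg2 : Avoids A a y z := ha y z hay.symm haz.symm hyz
  -- leg 3 : z → a avoiding y
  have hyUi : y ∉ (simLayersAux A a i).2 := fun hin => hyU (U_mono A a (by omega) hin)
  have hzUi : z ∉ (simLayersAux A a i).2 := fun hin => hzU (U_mono A a (by omega) hin)
  obtain ⟨l2, hl2, hsub2⟩ := lemA A a i x (layer_subset A a _ hx) y hyUi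
  have hzl : z ∉ l2 := fun hin => hzUi (hsub2 z hin)
  have hedge : min (A x y) (A z y) < A x z :=
    (min_le_right _ _).trans_lt (by rw [hsym z y]; exact h1)
  have leg3 : Avoids A y z a := avoids_rev hsym ⟨l2 ++ [z], hl2.concat hzl hedge⟩
  exact ⟨hay, hyz, haz, ⟨l, hl⟩, leg2, leg3⟩
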